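/- arXiv:1103.3468 — 3 statements merged into one kernel-verified Lean document; each statement's English description precedes it below -/
import Mathlib

section
/- Let S(m,n) = (1/(√(2π)·m!)) ∫₀^∞ He_m(x) He_n(x) e^{−x²/2} dx. For n ≥ 1, S(0,n) = He_{n−1}(0)/√(2π), and for m ≥ 1, S(m,0) = He_{m−1}(0)/(√(2π)·m!). -/
open MeasureTheory Real Polynomial

/-- Probabilists' Hermite polynomial `He n x`, with the convention `He n ≡ 0` for `n < 0`. -/
noncomputable def He (n : ℤ) (x : ℝ) : ℝ :=
  if n < 0 then 0 else Polynomial.aeval x (Polynomial.hermite n.toNat)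

/-- `S m n = (1/(√(2π)·m!)) ∫₀^∞ He_m(x) He_n(x) e^{−x²/2} dx`. -/
noncomputable def S (m n : ℕ) : ℝ :=
  (1 / (Real.sqrt (2 * Real.pi) * (Nat.factorial m))) *
    ∫ x in Set.Ioi (0 : ℝ), He m x * He n x * Real.exp (-x ^ 2 / 2)

lemma int_pow : ∀ k : ℕ, IntegrableOn (fun x : ℝ => x ^ k * Real.exp (-x ^ 2 / 2)) (Set.Ioi 0) := by
  intro k
  have h := integrableOn_rpow_mul_exp_neg_mul_sq (b := 1/2) one_half_pos
    (s := (k : ℝ)) (lt_of_lt_of_le neg_one_lt_zero (Nat.cast_nonneg k))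
  apply h.congr_fun ?_ measurableSet_Ioi
  intro x hx
  simp only [Real.rpow_natCast]
  ring_nf

lemma int_poly (p : ℤ[X]) : IntegrableOn (fun x : ℝ => aeval x p * Real.exp (-x ^ 2 / 2)) (Set.Ioi 0) := by
  have : (fun x : ℝ => aeval x p * Real.exp (-x ^ 2 / 2)) =
      fun x => ∑ i ∈ Finset.range (p.natDegree + 1), ((p.coeff i : ℝ) * (x ^ i * Real.exp (-x ^ 2 / 2))) := by
    funext x
    rw [aeval_eq_sum_range, Finset.sum_mul]
    simp [mul_assoc, zsmul_eq_mul]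
  rw [this]
  exact integrable_finset_sum _ fun i _ => (int_pow i).const_mul _

lemma tendsto_pow_gauss (k : ℕ) :
    Filter.Tendsto (fun x : ℝ => x ^ k * Real.exp (-x ^ 2 / 2)) Filter.atTop (nhds 0) := by
  have h := rpow_mul_exp_neg_mul_sq_isLittleO_exp_neg (b := 1/2) one_half_pos (k : ℝ)
  have ha : Filter.Tendsto (fun x : ℝ => x / 2) Filter.atTop Filter.atTop :=
    Filter.tendsto_id.atTop_div_const two_pos
  have hb := Filter.tendsto_neg_atTop_atBot.comp ha
  have h2 : Filter.Tendsto (fun x : ℝ => Real.exp (-(1/2) * x)) Filter.atTop (nhds 0) := by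
    refine (Real.tendsto_exp_atBot.comp hb).congr fun x => ?_
    simp only [Function.comp]
    ring_nf
  have := h.trans_tendsto h2
  apply this.congr'
  filter_upwards [Filter.eventually_gt_atTop (0:ℝ)] with x hx
  rw [Real.rpow_natCast]
  ring_nf

lemma tendsto_poly_gauss (p : ℤ[X]) :
    Filter.Tendsto (fun x : ℝ => aeval x p * Real.exp (-x ^ 2 / 2)) Filter.atTop (nhds 0) := by
  have : (fun x : ℝ => aeval x p * Real.exp (-x ^ 2 / 2)) =
      fun x => ∑ i ∈ Finset.range (p.natDegree + 1), ((p.coeff i : ℝ) * (x ^ i * Real.exp (-x ^ 2 / 2))) := by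
    funext x
    rw [aeval_eq_sum_range, Finset.sum_mul]
    simp [mul_assoc, zsmul_eq_mul]
  rw [this]
  have : (0:ℝ) = ∑ i ∈ Finset.range (p.natDegree + 1), ((p.coeff i : ℝ) * 0) := by simp
  rw [this]
  exact tendsto_finset_sum _ fun i _ => ((tendsto_pow_gauss i).const_mul _)

lemma key (n : ℕ) :
    ∫ x in Set.Ioi (0:ℝ), aeval x (hermite (n+1)) * Real.exp (-x ^ 2 / 2)
      = aeval (0:ℝ) (hermite n) := by
  have hd : ∀ x ∈ Set.Ioi (0:ℝ),
      HasDerivAt (fun x : ℝ => -(aeval x (hermite n) * Real.exp (-x ^ 2 / 2)))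
        (aeval x (hermite (n+1)) * Real.exp (-x ^ 2 / 2)) x := by
    intro x _
    have h1 : HasDerivAt (fun x : ℝ => Real.exp (-x ^ 2 / 2)) (-x * Real.exp (-x ^ 2 / 2)) x := by
      have : HasDerivAt (fun x : ℝ => -x ^ 2 / 2) (-x) x := by
        have := ((hasDerivAt_pow 2 x).neg).div_const 2
        simpa using this.congr_deriv (by ring)
      simpa [mul_comm] using this.exp
    have h2 := (Polynomial.hasDerivAt_aeval (q := hermite n) x).mul h1
    have h3 := h2.neg
    refine h3.congr_deriv ?_
    rw [hermite_succ]
    simp only [map_sub, map_mul, aeval_X]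
    ring
  have hc : ContinuousWithinAt (fun x : ℝ => -(aeval x (hermite n) * Real.exp (-x ^ 2 / 2)))
      (Set.Ici 0) 0 := by
    apply Continuous.continuousWithinAt
    exact ((Polynomial.continuous_aeval _).mul (Real.continuous_exp.comp (by fun_prop))).neg
  have ht : Filter.Tendsto (fun x : ℝ => -(aeval x (hermite n) * Real.exp (-x ^ 2 / 2)))
      Filter.atTop (nhds 0) := by
    simpa using (tendsto_poly_gauss (hermite n)).neg
  have := integral_Ioi_of_hasDerivAt_of_tendsto hc hd (int_poly (hermite (n+1))) ht
  rw [this]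
  simp

lemma He_nat (k : ℕ) (x : ℝ) : He (k : ℤ) x = aeval x (hermite k) := by
  simp [He]

/-- For `n ≥ 1`, `S(0,n) = He_{n−1}(0)/√(2π)`; for `m ≥ 1`,
`S(m,0) = He_{m−1}(0)/(√(2π)·m!)`. -/
theorem S_zero_left_and_right :
    (∀ n : ℕ, 1 ≤ n → S 0 n = He ((n : ℤ) - 1) 0 / Real.sqrt (2 * Real.pi)) ∧
    (∀ m : ℕ, 1 ≤ m →
      S m 0 = He ((m : ℤ) - 1) 0 / (Real.sqrt (2 * Real.pi) * (Nat.factorial m))) := by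
  have hHe0 : ∀ x : ℝ, He 0 x = 1 := by
    intro x; simp [He]
  constructor
  · intro n hn
    obtain ⟨k, rfl⟩ := Nat.exists_eq_add_of_le hn
    have hc : ((1 + k : ℕ) : ℤ) - 1 = (k : ℤ) := by push_cast; ring
    rw [S, hc, He_nat]
    have : ∀ x : ℝ, He 0 x * He (1 + k : ℕ) x * Real.exp (-x ^ 2 / 2)
        = aeval x (hermite (k + 1)) * Real.exp (-x ^ 2 / 2) := by
      intro x
      rw [hHe0, He_nat]
      norm_num [Nat.add_comm]
    simp only [Nat.cast_zero]
    simp only [this]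
    rw [key]
    simp
    ring
  · intro m hm
    obtain ⟨k, rfl⟩ := Nat.exists_eq_add_of_le hm
    have hc : ((1 + k : ℕ) : ℤ) - 1 = (k : ℤ) := by push_cast; ring
    rw [S, hc, He_nat]
    have : ∀ x : ℝ, He (1 + k : ℕ) x * He 0 x * Real.exp (-x ^ 2 / 2)
        = aeval x (hermite (k + 1)) * Real.exp (-x ^ 2 / 2) := by
      intro x
      rw [hHe0, He_nat]
      norm_num [Nat.add_comm]
    simp only [Nat.cast_zero]
    simp only [this]
    rw [key]
    ring
end

section
/- Let τ > 0 and Pr be real constants, t₀ ∈ ℝ, and let g_{ij} : [t₀, ∞) → ℝ (for i, j ∈ {1,2,3}) be differentiable functions satisfying the collision-only Shakhov moment system g_{ij}'(t) = (1/τ)[((1 − Pr)/5) q_i(t) − g_{ij}(t)], where q_i(t) = 2 g_{ii}(t) + Σ_{d=1}^3 g_{id}(t). Then for all t ≥ t₀ and each i ∈ {1,2,3}, q_i(t) = q_i(t₀) exp(−Pr (t − t₀)/τ). -/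
open MeasureTheory Real

/-- Generic exponential decay lemma. -/
theorem exp_decay_aux (c t₀ : ℝ) (q : ℝ → ℝ)
    (hq : ∀ t : ℝ, t₀ ≤ t → HasDerivWithinAt q (c * q t) (Set.Ici t₀) t) :
    ∀ t : ℝ, t₀ ≤ t → q t = q t₀ * Real.exp (c * (t - t₀)) := by
  intro t ht
  set h : ℝ → ℝ := fun s => q s * Real.exp (-c * (s - t₀)) with hh
  have hderiv : ∀ s : ℝ, t₀ ≤ s → HasDerivWithinAt h 0 (Set.Ici t₀) s := by
    intro s hs
    have he : HasDerivAt (fun s : ℝ => Real.exp (-c * (s - t₀)))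
        (Real.exp (-c * (s - t₀)) * (-c)) s := by
      have : HasDerivAt (fun s : ℝ => -c * (s - t₀)) (-c) s := by
        simpa using ((hasDerivAt_id s).sub_const t₀).const_mul (-c)
      simpa using this.exp
    have := (hq s hs).fun_mul he.hasDerivWithinAt
    refine this.congr_deriv ?_
    ring
  have hcont : ContinuousOn h (Set.Icc t₀ t) := fun s hs =>
    ((hderiv s hs.1).continuousWithinAt).mono Set.Icc_subset_Ici_self
  have hkey : ∀ x ∈ Set.Icc t₀ t, h x = h t₀ := by
    apply constant_of_has_deriv_right_zero hcont
    intro x hx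
    exact (hderiv x hx.1).mono (Set.Ici_subset_Ici.2 hx.1)
  have := hkey t ⟨ht, le_refl t⟩
  simp only [hh, sub_self, mul_zero, Real.exp_zero, mul_one] at this
  have hne : Real.exp (-c * (t - t₀)) ≠ 0 := Real.exp_ne_zero _
  rw [← this, mul_assoc, ← Real.exp_add]
  simp

/-- For solutions of the collision-only Shakhov moment system
`g_{ij}' = (1/τ)[((1−Pr)/5) q_i − g_{ij}]` with `q_i = 2g_{ii} + Σ_d g_{id}`,
the heat flux decays as `q_i(t) = q_i(t₀) exp(−Pr(t−t₀)/τ)`. -/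
theorem shakhov_heat_flux_decay (τ Pr t₀ : ℝ) (hτ : 0 < τ)
    (g : Fin 3 → Fin 3 → ℝ → ℝ)
    (hg : ∀ i j : Fin 3, ∀ t : ℝ, t₀ ≤ t →
      HasDerivWithinAt (g i j)
        ((1 / τ) * ((1 - Pr) / 5 * (2 * g i i t + ∑ d, g i d t) - g i j t))
        (Set.Ici t₀) t) :
    ∀ i : Fin 3, ∀ t : ℝ, t₀ ≤ t →
      2 * g i i t + ∑ d, g i d t =
        (2 * g i i t₀ + ∑ d, g i d t₀) * Real.exp (-Pr * (t - t₀) / τ) := by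
  intro i t ht
  have hτ' : τ ≠ 0 := ne_of_gt hτ
  set q : ℝ → ℝ := fun s => 2 * g i i s + ∑ d, g i d s with hq
  have hqd : ∀ s : ℝ, t₀ ≤ s → HasDerivWithinAt q ((-Pr / τ) * q s) (Set.Ici t₀) s := by
    intro s hs
    have hsum : HasDerivWithinAt (fun u => ∑ d, g i d u)
        (∑ d, (1 / τ) * ((1 - Pr) / 5 * (2 * g i i s + ∑ d', g i d' s) - g i d s))
        (Set.Ici t₀) s := HasDerivWithinAt.fun_sum (fun d _ => hg i d s hs)
    have := ((hg i i s hs).const_mul 2).fun_add hsum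
    refine this.congr_deriv ?_
    simp only [hq, Fin.sum_univ_three]
    field_simp
    ring
  have := exp_decay_aux (-Pr / τ) t₀ q hqd t ht
  simpa [hq, div_mul_eq_mul_div, neg_mul] using this
end

section
/- Let τ > 0 and Pr be real constants, t₀ ∈ ℝ, and let g_{ij} : [t₀, ∞) → ℝ (for i, j ∈ {1,2,3}) be differentiable functions satisfying the collision-only Shakhov moment system g_{ij}'(t) = (1/τ)[((1 − Pr)/5) q_i(t) − g_{ij}(t)], where q_i(t) = 2 g_{ii}(t) + Σ_{d=1}^3 g_{id}(t). Then for all t ≥ t₀ and all i, j ∈ {1,2,3}, g_{ij}(t) = (1/5) q_i(t₀) exp(−Pr (t − t₀)/τ) − ((1/5) q_i(t₀) − g_{ij}(t₀)) exp(−(t − t₀)/τ). -/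
open MeasureTheory Real

lemma shakhov_aux_exp_ode (t₀ c : ℝ) (f : ℝ → ℝ)
    (hf : ∀ t, t₀ ≤ t → HasDerivWithinAt f (c * f t) (Set.Ici t₀) t) :
    ∀ t, t₀ ≤ t → f t = f t₀ * Real.exp (c * (t - t₀)) := by
  intro t ht
  have key : ∀ s, t₀ ≤ s →
      HasDerivWithinAt (fun s => f s * Real.exp (-c * s)) 0 (Set.Ici t₀) s := by
    intro s hs
    have he : HasDerivAt (fun s => Real.exp (-c * s)) (-c * Real.exp (-c * s)) s := by
      have := ((hasDerivAt_id s).const_mul (-c)).exp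
      simpa [mul_comm] using this
    have := (hf s hs).mul he.hasDerivWithinAt
    refine this.congr_deriv ?_
    ring
  have hconst : f t * Real.exp (-c * t) = f t₀ * Real.exp (-c * t₀) := by
    rcases eq_or_lt_of_le ht with h0 | h0
    · rw [h0]
    · have hdiff : DifferentiableOn ℝ (fun s => f s * Real.exp (-c * s)) (Set.Icc t₀ t) := by
        intro x hx
        exact ((key x hx.1).mono (Set.Icc_subset_Ici_self : Set.Icc t₀ t ⊆ Set.Ici t₀)).differentiableWithinAt
      have hderiv : ∀ x ∈ Set.Ico t₀ t,
          derivWithin (fun s => f s * Real.exp (-c * s)) (Set.Icc t₀ t) x = 0 := by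
        intro x hx
        have := (key x hx.1).mono (Set.Icc_subset_Ici_self : Set.Icc t₀ t ⊆ Set.Ici t₀)
        exact this.derivWithin ((uniqueDiffOn_Icc h0) x ⟨hx.1, hx.2.le⟩)
      exact constant_of_derivWithin_zero hdiff hderiv t ⟨ht, le_refl t⟩
  have h2 : f t * Real.exp (-c * t) * Real.exp (c * t)
      = f t₀ * Real.exp (-c * t₀) * Real.exp (c * t) := by rw [hconst]
  rw [mul_assoc, ← Real.exp_add, neg_mul, neg_add_cancel, Real.exp_zero, mul_one] at h2
  rw [h2, mul_assoc, ← Real.exp_add]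
  ring_nf

/-- For solutions of the collision-only Shakhov moment system
`g_{ij}' = (1/τ)[((1−Pr)/5) q_i − g_{ij}]` with `q_i = 2g_{ii} + Σ_d g_{id}`,
`g_{ij}(t) = (1/5)q_i(t₀) e^{−Pr(t−t₀)/τ} − ((1/5)q_i(t₀) − g_{ij}(t₀)) e^{−(t−t₀)/τ}`. -/
theorem shakhov_collision_solution (τ Pr t₀ : ℝ) (hτ : 0 < τ)
    (g : Fin 3 → Fin 3 → ℝ → ℝ)
    (hg : ∀ i j : Fin 3, ∀ t : ℝ, t₀ ≤ t →
      HasDerivWithinAt (g i j)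
        ((1 / τ) * ((1 - Pr) / 5 * (2 * g i i t + ∑ d, g i d t) - g i j t))
        (Set.Ici t₀) t) :
    ∀ i j : Fin 3, ∀ t : ℝ, t₀ ≤ t →
      g i j t = (1 / 5) * (2 * g i i t₀ + ∑ d, g i d t₀) *
          Real.exp (-Pr * (t - t₀) / τ) -
        ((1 / 5) * (2 * g i i t₀ + ∑ d, g i d t₀) - g i j t₀) *
          Real.exp (-(t - t₀) / τ) := by
  intro i j t ht
  have hτ' : τ ≠ 0 := ne_of_gt hτ
  set q : ℝ → ℝ := fun s => 2 * g i i s + ∑ d, g i d s with hq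
  -- Step 1: q satisfies q' = (-Pr/τ) q
  have hq' : ∀ s, t₀ ≤ s → HasDerivWithinAt q ((-Pr / τ) * q s) (Set.Ici t₀) s := by
    intro s hs
    have h0 := hg i 0 s hs
    have h1 := hg i 1 s hs
    have h2 := hg i 2 s hs
    have hii := hg i i s hs
    have : HasDerivWithinAt (fun u => 2 * g i i u + (g i 0 u + g i 1 u + g i 2 u))
        (2 * ((1 / τ) * ((1 - Pr) / 5 * (2 * g i i s + ∑ d, g i d s) - g i i s)) +
          ((1 / τ) * ((1 - Pr) / 5 * (2 * g i i s + ∑ d, g i d s) - g i 0 s) +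
           (1 / τ) * ((1 - Pr) / 5 * (2 * g i i s + ∑ d, g i d s) - g i 1 s) +
           (1 / τ) * ((1 - Pr) / 5 * (2 * g i i s + ∑ d, g i d s) - g i 2 s)))
        (Set.Ici t₀) s := (hii.const_mul 2).add ((h0.add h1).add h2)
    have heq : q = fun u => 2 * g i i u + (g i 0 u + g i 1 u + g i 2 u) := by
      funext u; simp [hq, Fin.sum_univ_three]
    rw [heq]
    convert this using 1
    simp only [hq, Fin.sum_univ_three]
    field_simp
    ring
  have hqsol : ∀ s, t₀ ≤ s → q s = q t₀ * Real.exp ((-Pr / τ) * (s - t₀)) :=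
    shakhov_aux_exp_ode t₀ (-Pr / τ) q hq'
  -- Step 2: u = g i j - F satisfies u' = (-1/τ) u
  set F : ℝ → ℝ := fun s => (1 / 5) * q t₀ * Real.exp ((-Pr / τ) * (s - t₀)) -
      ((1 / 5) * q t₀ - g i j t₀) * Real.exp ((-1 / τ) * (s - t₀)) with hF
  have hF' : ∀ s, HasDerivAt F
      ((1 / 5) * q t₀ * ((-Pr / τ) * Real.exp ((-Pr / τ) * (s - t₀))) -
       ((1 / 5) * q t₀ - g i j t₀) * ((-1 / τ) * Real.exp ((-1 / τ) * (s - t₀)))) s := by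
    intro s
    have e1 : HasDerivAt (fun u => Real.exp ((-Pr / τ) * (u - t₀)))
        ((-Pr / τ) * Real.exp ((-Pr / τ) * (s - t₀))) s := by
      have := ((((hasDerivAt_id s).sub_const t₀).const_mul (-Pr / τ))).exp
      simpa [mul_comm] using this
    have e2 : HasDerivAt (fun u => Real.exp ((-1 / τ) * (u - t₀)))
        ((-1 / τ) * Real.exp ((-1 / τ) * (s - t₀))) s := by
      have := ((((hasDerivAt_id s).sub_const t₀).const_mul (-1 / τ))).exp
      simpa [mul_comm] using this
    exact (e1.const_mul _).sub (e2.const_mul _)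
  have hu : ∀ s, t₀ ≤ s →
      HasDerivWithinAt (fun u => g i j u - F u) ((-1 / τ) * (g i j s - F s)) (Set.Ici t₀) s := by
    intro s hs
    have := (hg i j s hs).sub (hF' s).hasDerivWithinAt
    refine this.congr_deriv ?_
    have hqs := hqsol s hs
    simp only [hF]
    rw [show (2 * g i i s + ∑ d, g i d s) = q s from rfl, hqs]
    field_simp
    ring
  have husol := shakhov_aux_exp_ode t₀ (-1 / τ) (fun u => g i j u - F u) hu t ht
  have hF0 : F t₀ = g i j t₀ := by simp [hF]
  simp only [hF0, sub_self, zero_mul] at husol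
  have hgt : g i j t = F t := by linarith [husol]
  rw [show -Pr * (t - t₀) / τ = -Pr / τ * (t - t₀) by ring,
      show -(t - t₀) / τ = -1 / τ * (t - t₀) by ring]
  exact hgt
end
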